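/- Let (X, 𝒜, μ) be a non-atomic probability space, 𝒯 a tree in 𝒜, and M_𝒯 the associated dyadic maximal operator. Let f, M₁, M₂ be real numbers with M₁ ≥ f > M₂ ≥ 0. Then for every measurable φ : X → [0,∞) with ∫_X φ dμ = f, ‖φ‖_∞ = M₁ and essinf_X φ = M₂, one has ∫_X M_𝒯φ dμ ≤ f + (f − M₂)·log((M₁ − M₂)/(f − M₂)). -/

import Mathlib

open MeasureTheory Filter Set

noncomputable section

/-- The generations of a tree: generation 0 is `{univ}`, and generation `n+1`
consists of the children (via `C`) of elements of generation `n`. -/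
def treeGen {X : Type*} (C : Set X → Set (Set X)) : ℕ → Set (Set X)
  | 0 => {Set.univ}
  | n + 1 => ⋃ I ∈ treeGen C n, C I

/-- `T` is a tree on the measure space `(X, μ)` with child assignment `C`. -/
structure IsTree {X : Type*} [MeasurableSpace X] (μ : Measure X)
    (T : Set (Set X)) (C : Set X → Set (Set X)) : Prop where
  univ_mem : Set.univ ∈ T
  meas : ∀ I ∈ T, MeasurableSet I
  pos : ∀ I ∈ T, 0 < μ I
  child_sub : ∀ I ∈ T, C I ⊆ T
  child_countable : ∀ I ∈ T, (C I).Countable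
  child_nontrivial : ∀ I ∈ T, ∃ J ∈ C I, ∃ J' ∈ C I, J ≠ J'
  child_almost_disjoint : ∀ I ∈ T, ∀ J ∈ C I, ∀ J' ∈ C I, J ≠ J' → μ (J ∩ J') = 0
  child_cover : ∀ I ∈ T, I = ⋃₀ C I
  eq_iUnion_gen : T = ⋃ n, treeGen C n
  tendsto_gen : Filter.Tendsto (fun n => ⨆ I ∈ treeGen C n, μ I) Filter.atTop (nhds 0)

/-- The dyadic maximal operator associated with the tree `T`. -/
def maxOp {X : Type*} [MeasurableSpace X] (μ : Measure X) (T : Set (Set X))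
    (φ : X → ℝ) (x : X) : ℝ :=
  sSup {r : ℝ | ∃ I ∈ T, x ∈ I ∧ r = (∫ y in I, |φ y| ∂μ) / (μ I).toReal}

namespace IsTree

variable {X : Type*} [MeasurableSpace X] {μ : Measure X} {T : Set (Set X)}
  {C : Set X → Set (Set X)} (hT : IsTree μ T C)

omit [MeasurableSpace X] in
lemma mem_gen_succ {J : Set X} {n : ℕ} :
    J ∈ treeGen C (n + 1) ↔ ∃ I ∈ treeGen C n, J ∈ C I := by
  simp [treeGen]

include hT

lemma gen_subset (n : ℕ) : treeGen C n ⊆ T := by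
  rw [hT.eq_iUnion_gen]; exact subset_iUnion (treeGen C) n

lemma child_subset {I J : Set X} (hI : I ∈ T) (hJ : J ∈ C I) : J ⊆ I := by
  conv_rhs => rw [hT.child_cover I hI]
  exact subset_sUnion_of_mem hJ

lemma gen_countable (n : ℕ) : (treeGen C n).Countable := by
  induction n with
  | zero => exact countable_singleton _
  | succ n ih => exact Countable.biUnion ih (fun I hI => hT.child_countable I (hT.gen_subset n hI))

lemma countable : T.Countable := by
  rw [hT.eq_iUnion_gen]; exact countable_iUnion hT.gen_countable

lemma gen_aedisjoint (n : ℕ) {J K : Set X} (hJ : J ∈ treeGen C n) (hK : K ∈ treeGen C n)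
    (hne : J ≠ K) : μ (J ∩ K) = 0 := by
  induction n generalizing J K with
  | zero =>
    simp only [treeGen, mem_singleton_iff] at hJ hK
    exact absurd (hJ.trans hK.symm) hne
  | succ n ih =>
    obtain ⟨I, hI, hJI⟩ := mem_gen_succ.mp hJ
    obtain ⟨I', hI', hKI'⟩ := mem_gen_succ.mp hK
    by_cases h : I = I'
    · subst h
      exact hT.child_almost_disjoint I (hT.gen_subset n hI) J hJI K hKI' hne
    · have h1 : J ⊆ I := hT.child_subset (hT.gen_subset n hI) hJI
      have h2 : K ⊆ I' := hT.child_subset (hT.gen_subset n hI') hKI'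
      exact measure_mono_null (inter_subset_inter h1 h2) (ih hI hI' h)

lemma gen_ancestor {n m : ℕ} (hmn : m ≤ n) {J : Set X} (hJ : J ∈ treeGen C n) :
    ∃ K ∈ treeGen C m, J ⊆ K := by
  induction n generalizing J with
  | zero =>
    obtain rfl : m = 0 := Nat.le_zero.mp hmn
    exact ⟨J, hJ, subset_rfl⟩
  | succ n ih =>
    rcases Nat.eq_or_lt_of_le hmn with rfl | hlt
    · exact ⟨J, hJ, subset_rfl⟩
    · obtain ⟨I, hI, hJI⟩ := mem_gen_succ.mp hJ
      obtain ⟨K, hK, hIK⟩ := ih (Nat.lt_succ_iff.mp hlt) hI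
      exact ⟨K, hK, (hT.child_subset (hT.gen_subset n hI) hJI).trans hIK⟩

lemma nested_or_null {n m : ℕ} (hmn : m ≤ n) {I J : Set X}
    (hI : I ∈ treeGen C m) (hJ : J ∈ treeGen C n) : J ⊆ I ∨ μ (J ∩ I) = 0 := by
  obtain ⟨K, hK, hJK⟩ := hT.gen_ancestor hmn hJ
  by_cases h : K = I
  · exact Or.inl (h ▸ hJK)
  · exact Or.inr (measure_mono_null (inter_subset_inter hJK subset_rfl)
      (hT.gen_aedisjoint m hK hI h))

end IsTree

section MaxAux

variable {X : Type*} [MeasurableSpace X] {μ : Measure X} [IsProbabilityMeasure μ]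
  {T : Set (Set X)} {C : Set X → Set (Set X)} {φ : X → ℝ} {M₁ M₂ : ℝ}

/-- The average of `|φ|` over `I`. -/
def avgI {X : Type*} [MeasurableSpace X] (μ : Measure X) (φ : X → ℝ) (I : Set X) : ℝ :=
  (∫ y in I, |φ y| ∂μ) / (μ I).toReal

lemma maxOp_set_eq (x : X) :
    {r : ℝ | ∃ I ∈ T, x ∈ I ∧ r = (∫ y in I, |φ y| ∂μ) / (μ I).toReal}
      = {r : ℝ | ∃ I ∈ T, x ∈ I ∧ r = avgI μ φ I} := rfl

omit [IsProbabilityMeasure μ] in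
lemma maxOp_set_nonempty (hTu : Set.univ ∈ T) (x : X) :
    {r : ℝ | ∃ I ∈ T, x ∈ I ∧ r = avgI μ φ I}.Nonempty :=
  ⟨avgI μ φ Set.univ, Set.univ, hTu, mem_univ x, rfl⟩

lemma avgI_univ (hnn : ∀ x, 0 ≤ φ x) : avgI μ φ Set.univ = ∫ x, φ x ∂μ := by
  simp only [avgI, measure_univ, ENNReal.toReal_one, div_one, setIntegral_univ]
  exact integral_congr_ae (Eventually.of_forall fun y => abs_of_nonneg (hnn y))

lemma avgI_le {I : Set X} (hpos : 0 < μ I)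
    (hnn : ∀ x, 0 ≤ φ x) (hφint : Integrable φ μ) (hbd : ∀ᵐ x ∂μ, φ x ≤ M₁) :
    avgI μ φ I ≤ M₁ := by
  have hpos' : 0 < (μ I).toReal := ENNReal.toReal_pos hpos.ne' (measure_ne_top μ I)
  rw [avgI, div_le_iff₀ hpos']
  calc ∫ y in I, |φ y| ∂μ = ∫ y in I, φ y ∂μ :=
        integral_congr_ae (Eventually.of_forall fun y => abs_of_nonneg (hnn y))
    _ ≤ ∫ _ in I, M₁ ∂μ :=
        integral_mono_ae hφint.restrict (integrable_const _) (ae_restrict_of_ae hbd)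
    _ = M₁ * (μ I).toReal := by rw [setIntegral_const, smul_eq_mul, mul_comm, measureReal_def]

lemma maxOp_bddAbove (hT : IsTree μ T C)
    (hnn : ∀ x, 0 ≤ φ x) (hφint : Integrable φ μ) (hbd : ∀ᵐ x ∂μ, φ x ≤ M₁) (x : X) :
    M₁ ∈ upperBounds {r : ℝ | ∃ I ∈ T, x ∈ I ∧ r = avgI μ φ I} := by
  rintro r ⟨I, hI, -, rfl⟩
  exact avgI_le (hT.pos I hI) hnn hφint hbd

lemma maxOp_le_M₁ (hT : IsTree μ T C)
    (hnn : ∀ x, 0 ≤ φ x) (hφint : Integrable φ μ) (hbd : ∀ᵐ x ∂μ, φ x ≤ M₁) (x : X) :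
    maxOp μ T φ x ≤ M₁ :=
  csSup_le (maxOp_set_nonempty hT.univ_mem x) (fun r hr => maxOp_bddAbove hT hnn hφint hbd x hr)

lemma le_maxOp (hT : IsTree μ T C)
    (hnn : ∀ x, 0 ≤ φ x) (hφint : Integrable φ μ) (hbd : ∀ᵐ x ∂μ, φ x ≤ M₁)
    {x : X} {I : Set X} (hI : I ∈ T) (hxI : x ∈ I) :
    avgI μ φ I ≤ maxOp μ T φ x :=
  le_csSup ⟨M₁, maxOp_bddAbove hT hnn hφint hbd x⟩ ⟨I, hI, hxI, rfl⟩

lemma integral_le_maxOp (hT : IsTree μ T C)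
    (hnn : ∀ x, 0 ≤ φ x) (hφint : Integrable φ μ) (hbd : ∀ᵐ x ∂μ, φ x ≤ M₁) (x : X) :
    (∫ x, φ x ∂μ) ≤ maxOp μ T φ x := by
  rw [← avgI_univ hnn]
  exact le_maxOp hT hnn hφint hbd hT.univ_mem (mem_univ x)

lemma maxOp_level_set (hT : IsTree μ T C)
    (hnn : ∀ x, 0 ≤ φ x) (hφint : Integrable φ μ) (hbd : ∀ᵐ x ∂μ, φ x ≤ M₁) (t : ℝ) :
    {x | t < maxOp μ T φ x} = ⋃₀ {I | I ∈ T ∧ t < avgI μ φ I} := by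
  ext x
  constructor
  · intro hx
    obtain ⟨r, ⟨I, hI, hxI, rfl⟩, hr⟩ :=
      exists_lt_of_lt_csSup (maxOp_set_nonempty hT.univ_mem x) hx
    exact ⟨I, ⟨hI, hr⟩, hxI⟩
  · rintro ⟨I, ⟨hI, havg⟩, hxI⟩
    exact lt_of_lt_of_le havg (le_maxOp hT hnn hφint hbd hI hxI)

lemma maxOp_measurable (hT : IsTree μ T C)
    (hnn : ∀ x, 0 ≤ φ x) (hφint : Integrable φ μ) (hbd : ∀ᵐ x ∂μ, φ x ≤ M₁) :
    Measurable (maxOp μ T φ) := by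
  apply measurable_of_Ioi
  intro t
  have : maxOp μ T φ ⁻¹' Ioi t = {x | t < maxOp μ T φ x} := rfl
  rw [this, maxOp_level_set hT hnn hφint hbd t]
  refine MeasurableSet.sUnion (hT.countable.mono (fun I hI => hI.1)) (fun I hI => hT.meas I hI.1)

end MaxAux
section Weak

variable {X : Type*} [MeasurableSpace X] {μ : Measure X} [IsProbabilityMeasure μ]
  {T : Set (Set X)} {C : Set X → Set (Set X)} {φ : X → ℝ} {f M₁ M₂ : ℝ}

lemma weak_type_bound (hT : IsTree μ T C)
    (hnn : ∀ x, 0 ≤ φ x) (hφint : Integrable φ μ) (hbd : ∀ᵐ x ∂μ, φ x ≤ M₁)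
    (hlb : ∀ᵐ x ∂μ, M₂ ≤ φ x) (hintf : (∫ x, φ x ∂μ) = f)
    {t : ℝ} (ht : f < t) (hM₂f : M₂ ≤ f) :
    μ {x | t < maxOp μ T φ x} ≤ ENNReal.ofReal ((f - M₂) / (t - M₂)) := by
  classical
  have htM₂ : 0 < t - M₂ := sub_pos.2 (lt_of_le_of_lt hM₂f ht)
  -- the nonnegative part above M₂
  set ψ : X → ENNReal := fun x => ENNReal.ofReal (φ x - M₂) with hψ
  have hsubint : Integrable (fun x => φ x - M₂) μ := hφint.sub (integrable_const M₂)
  have hsubnn : 0 ≤ᵐ[μ] fun x => φ x - M₂ := hlb.mono fun x hx => sub_nonneg.2 hx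
  have htot : ∫⁻ x, ψ x ∂μ = ENNReal.ofReal (f - M₂) := by
    rw [← ofReal_integral_eq_lintegral_ofReal hsubint hsubnn]
    congr 1
    rw [integral_sub hφint (integrable_const M₂), hintf, integral_const, measureReal_def, measure_univ]
    simp
  -- the stopping family
  set S : Set (Set X) :=
    {I | ∃ n, I ∈ treeGen C n ∧ t < avgI μ φ I ∧
      ∀ m < n, ∀ K ∈ treeGen C m, I ⊆ K → avgI μ φ K ≤ t} with hS
  have hS_sub : S ⊆ T := by
    rintro I ⟨n, hIn, -, -⟩; exact hT.gen_subset n hIn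
  -- every bad set is contained in a stopping set
  have hcover : ∀ I ∈ T, t < avgI μ φ I → ∃ J ∈ S, I ⊆ J := by
    intro I hI havg
    have : ∃ n, I ∈ treeGen C n := by
      have := hT.eq_iUnion_gen ▸ hI
      exact mem_iUnion.mp this
    obtain ⟨n, hIn⟩ := this
    have hP : ∃ m, ∃ K ∈ treeGen C m, I ⊆ K ∧ t < avgI μ φ K := ⟨n, I, hIn, subset_rfl, havg⟩
    obtain ⟨K, hK, hIK, havgK⟩ := Nat.find_spec hP
    refine ⟨K, ⟨Nat.find hP, hK, havgK, ?_⟩, hIK⟩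
    intro m hm K' hK' hKK'
    by_contra hlt
    push_neg at hlt
    exact Nat.find_min hP hm ⟨K', hK', hIK.trans hKK', hlt⟩
  -- stopping sets are pairwise a.e. disjoint
  have hdisj_aux : ∀ {n m : ℕ} {J K : Set X}, n ≤ m →
      J ∈ treeGen C n → t < avgI μ φ J →
      K ∈ treeGen C m → t < avgI μ φ K →
      (∀ m' < m, ∀ K' ∈ treeGen C m', K ⊆ K' → avgI μ φ K' ≤ t) →
      J ≠ K → μ (J ∩ K) = 0 := by
    intro n m J K hnm hJ havgJ hK havgK hstop hne
    rcases hT.nested_or_null hnm hJ hK with hKJ | hnull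
    · rcases Nat.lt_or_ge n m with hlt | hge
      · exact absurd (hstop n hlt J hJ hKJ) (not_le.2 havgJ)
      · have : n = m := le_antisymm hnm hge
        subst this
        exact hT.gen_aedisjoint n hJ hK hne
    · rwa [inter_comm]
  have hdisj : ∀ J ∈ S, ∀ K ∈ S, J ≠ K → μ (J ∩ K) = 0 := by
    rintro J ⟨n, hJn, havgJ, hstopJ⟩ K ⟨m, hKm, havgK, hstopK⟩ hne
    rcases le_total n m with h | h
    · exact hdisj_aux h hJn havgJ hKm havgK hstopK hne
    · rw [inter_comm]
      exact hdisj_aux h hKm havgK hJn havgJ hstopJ hne.symm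
  -- key estimate for each stopping set
  have hkey : ∀ J ∈ S, ENNReal.ofReal (t - M₂) * μ J ≤ ∫⁻ x in J, ψ x ∂μ := by
    intro J hJS
    have hJT : J ∈ T := hS_sub hJS
    obtain ⟨n, hJn, havgJ, -⟩ := hJS
    have hpos : 0 < (μ J).toReal :=
      ENNReal.toReal_pos (hT.pos J hJT).ne' (measure_ne_top μ J)
    have havg' : t * (μ J).toReal < ∫ y in J, φ y ∂μ := by
      have := (lt_div_iff₀ hpos).mp havgJ
      calc t * (μ J).toReal < ∫ y in J, |φ y| ∂μ := this
        _ = ∫ y in J, φ y ∂μ :=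
            integral_congr_ae (Eventually.of_forall fun y => abs_of_nonneg (hnn y))
    have hsub : (t - M₂) * (μ J).toReal ≤ ∫ y in J, (φ y - M₂) ∂μ := by
      rw [integral_sub hφint.restrict (integrable_const M₂), setIntegral_const, smul_eq_mul, measureReal_def]
      nlinarith [havg']
    have hlint : ∫⁻ x in J, ψ x ∂μ = ENNReal.ofReal (∫ y in J, (φ y - M₂) ∂μ) :=
      (ofReal_integral_eq_lintegral_ofReal hsubint.restrict (ae_restrict_of_ae hsubnn)).symm
    calc ENNReal.ofReal (t - M₂) * μ J
        = ENNReal.ofReal ((t - M₂) * (μ J).toReal) := by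
          rw [ENNReal.ofReal_mul htM₂.le, ENNReal.ofReal_toReal (measure_ne_top μ J)]
      _ ≤ ENNReal.ofReal (∫ y in J, (φ y - M₂) ∂μ) := ENNReal.ofReal_le_ofReal hsub
      _ = ∫⁻ x in J, ψ x ∂μ := hlint.symm
  -- putting it together
  have hcount : S.Countable := hT.countable.mono hS_sub
  haveI : Countable ↥S := hcount.to_subtype
  have hEsub : {x | t < maxOp μ T φ x} ⊆ ⋃ (J : ↥S), (J : Set X) := by
    rw [maxOp_level_set hT hnn hφint hbd t]
    rintro x ⟨I, ⟨hI, havg⟩, hxI⟩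
    obtain ⟨J, hJS, hIJ⟩ := hcover I hI havg
    exact mem_iUnion.2 ⟨⟨J, hJS⟩, hIJ hxI⟩
  have hmain : ENNReal.ofReal (t - M₂) * μ {x | t < maxOp μ T φ x}
      ≤ ENNReal.ofReal (f - M₂) := by
    calc ENNReal.ofReal (t - M₂) * μ {x | t < maxOp μ T φ x}
        ≤ ENNReal.ofReal (t - M₂) * μ (⋃ (J : ↥S), (J : Set X)) :=
          mul_le_mul_right (measure_mono hEsub) _
      _ ≤ ENNReal.ofReal (t - M₂) * ∑' (J : ↥S), μ (J : Set X) :=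
          mul_le_mul_right (measure_iUnion_le _) _
      _ = ∑' (J : ↥S), ENNReal.ofReal (t - M₂) * μ (J : Set X) := ENNReal.tsum_mul_left.symm
      _ ≤ ∑' (J : ↥S), ∫⁻ x in (J : Set X), ψ x ∂μ :=
          ENNReal.tsum_le_tsum (fun J => hkey J J.2)
      _ = ∫⁻ x in ⋃ (J : ↥S), (J : Set X), ψ x ∂μ := by
          rw [lintegral_iUnion₀]
          · exact fun J => (hT.meas J (hS_sub J.2)).nullMeasurableSet
          · intro J K hne
            exact hdisj J J.2 K K.2 (fun h => hne (Subtype.ext h))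
      _ ≤ ∫⁻ x, ψ x ∂μ := setLIntegral_le_lintegral _ _
      _ = ENNReal.ofReal (f - M₂) := htot
  rw [ENNReal.ofReal_div_of_pos htM₂]
  rw [ENNReal.le_div_iff_mul_le (Or.inl ?_) (Or.inl ENNReal.ofReal_ne_top)]
  · rw [mul_comm]; exact hmain
  · simpa [ENNReal.ofReal_eq_zero, not_le] using htM₂

end Weak
set_option maxHeartbeats 1000000 in
theorem stmt1 {X : Type*} [MeasurableSpace X] (μ : Measure X)
    [IsProbabilityMeasure μ] [NullSingletonClass μ]
    (T : Set (Set X)) (C : Set X → Set (Set X)) (hT : IsTree μ T C)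
    (f M₁ M₂ : ℝ) (h1 : M₁ ≥ f) (h2 : f > M₂) (h3 : M₂ ≥ 0)
    (φ : X → ℝ) (hmeas : Measurable φ) (hnn : ∀ x, 0 ≤ φ x)
    (hint : (∫ x, φ x ∂μ) = f) (hsup : essSup φ μ = M₁) (hinf : essInf φ μ = M₂) :
    (∫ x, maxOp μ T φ x ∂μ) ≤ f + (f - M₂) * Real.log ((M₁ - M₂) / (f - M₂)) := by
  have hf0 : 0 < f := lt_of_le_of_lt h3 h2
  have hfM₂ : 0 < f - M₂ := sub_pos.2 h2
  have hM₁M₂ : 0 < M₁ - M₂ := sub_pos.2 (lt_of_lt_of_le h2 h1)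
  -- φ is integrable
  have hφint : Integrable φ μ := by
    by_contra h
    rw [integral_undef h] at hint
    linarith
  -- φ ≤ M₁ a.e.
  have hbddabove : IsBoundedUnder (· ≤ ·) (ae μ) φ := by
    by_contra h
    have hempty : {a : ℝ | μ {x | a < φ x} = 0} = ∅ := by
      ext a
      simp only [mem_setOf_eq, mem_empty_iff_false, iff_false]
      intro ha
      exact h ⟨a, eventually_map.2 (by
        rw [ae_iff]
        convert ha using 2
        ext x
        simp [not_le])⟩
    rw [essSup_eq_sInf, hempty, Real.sInf_empty] at hsup
    linarith
  have hbd : ∀ᵐ x ∂μ, φ x ≤ M₁ := by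
    have := ae_le_essSup (f := φ) (μ := μ) hbddabove
    rwa [hsup] at this
  -- M₂ ≤ φ a.e.
  have hlbdd : IsBoundedUnder (· ≥ ·) (ae μ) φ :=
    ⟨0, eventually_map.2 (Eventually.of_forall hnn)⟩
  have hlb : ∀ᵐ x ∂μ, M₂ ≤ φ x := by
    have := ae_essInf_le (f := φ) (μ := μ) hlbdd
    rwa [hinf] at this
  -- basic facts about the maximal function
  have hmeasM : Measurable (maxOp μ T φ) := maxOp_measurable hT hnn hφint hbd
  have hMge : ∀ x, f ≤ maxOp μ T φ x := fun x => hint ▸ integral_le_maxOp hT hnn hφint hbd x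
  have hMle : ∀ x, maxOp μ T φ x ≤ M₁ := maxOp_le_M₁ hT hnn hφint hbd
  have hMnn : 0 ≤ᵐ[μ] maxOp μ T φ := Eventually.of_forall fun x => hf0.le.trans (hMge x)
  have hMint : Integrable (maxOp μ T φ) μ := by
    refine Integrable.mono' (integrable_const M₁) hmeasM.aestronglyMeasurable
      (Eventually.of_forall fun x => ?_)
    rw [Real.norm_eq_abs, abs_of_nonneg (hf0.le.trans (hMge x))]
    exact hMle x
  -- layer cake
  rw [Integrable.integral_eq_integral_meas_lt hMint hMnn]
  set G : ℝ → ℝ := fun t => (μ {a | t < maxOp μ T φ a}).toReal with hG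
  set H : ℝ → ℝ := fun t => (Ioc (0 : ℝ) f).indicator (fun _ => (1 : ℝ)) t
    + (Ioc f M₁).indicator (fun s => (f - M₂) / (s - M₂)) t with hH
  -- properties of G
  have hGanti : Antitone G := by
    intro s t hst
    exact ENNReal.toReal_mono (measure_ne_top μ _)
      (measure_mono fun x hx => lt_of_le_of_lt hst hx)
  have hG1 : ∀ t, G t ≤ 1 := by
    intro t
    have : μ {a | t < maxOp μ T φ a} ≤ 1 := prob_le_one
    simpa using ENNReal.toReal_mono ENNReal.one_ne_top this
  have hGnn : ∀ t, 0 ≤ G t := fun t => ENNReal.toReal_nonneg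
  have hG0 : ∀ t, M₁ < t → G t = 0 := by
    intro t ht
    have : {a | t < maxOp μ T φ a} = ∅ := by
      ext x
      simp only [mem_setOf_eq, mem_empty_iff_false, iff_false, not_lt]
      exact (hMle x).trans ht.le
    simp [hG, this]
  -- integrability of G on Ioi 0
  have hdom : Integrable ((Ioc (0:ℝ) M₁).indicator fun _ => (1:ℝ)) := by
    rw [integrable_indicator_iff measurableSet_Ioc]
    exact integrableOn_const measure_Ioc_lt_top.ne
  have hGint : IntegrableOn G (Ioi 0) := by
    refine Integrable.mono' hdom.integrableOn
      hGanti.measurable.aestronglyMeasurable.restrict ?_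
    refine (ae_restrict_iff' measurableSet_Ioi).2 (Eventually.of_forall fun t ht => ?_)
    rw [Real.norm_eq_abs, abs_of_nonneg (hGnn t)]
    by_cases htM : t ≤ M₁
    · have : t ∈ Ioc (0:ℝ) M₁ := ⟨ht, htM⟩
      rw [indicator_of_mem this]
      exact hG1 t
    · push_neg at htM
      rw [hG0 t htM]
      exact indicator_nonneg (fun _ _ => zero_le_one) t
  -- integrability of H on Ioi 0
  have hind1 : Integrable ((Ioc (0:ℝ) f).indicator fun _ => (1:ℝ)) := by
    rw [integrable_indicator_iff measurableSet_Ioc]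
    exact integrableOn_const measure_Ioc_lt_top.ne
  have hind2 : Integrable ((Ioc f M₁).indicator fun s => (f - M₂) / (s - M₂)) := by
    refine (integrable_indicator_iff measurableSet_Ioc).2 ?_
    have hdom2 : IntegrableOn (fun _ => (1:ℝ)) (Ioc f M₁) := by
      exact integrableOn_const measure_Ioc_lt_top.ne
    refine Integrable.mono' hdom2
      ((measurable_const.div (measurable_id.sub measurable_const)).aestronglyMeasurable.restrict) ?_
    refine (ae_restrict_iff' measurableSet_Ioc).2 (Eventually.of_forall fun s hs => ?_)
    have hs1 : f < s := hs.1
    have hs2 : 0 < s - M₂ := by linarith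
    rw [Real.norm_eq_abs, abs_of_nonneg (div_nonneg hfM₂.le hs2.le)]
    rw [div_le_one hs2]
    linarith
  have hHint : IntegrableOn H (Ioi 0) := (hind1.add hind2).integrableOn
  -- pointwise comparison on Ioi 0
  have hpt : ∀ t ∈ Ioi (0:ℝ), G t ≤ H t := by
    intro t ht
    simp only [mem_Ioi] at ht
    by_cases htf : t ≤ f
    · have h1' : t ∈ Ioc (0:ℝ) f := ⟨ht, htf⟩
      have h2' : (0:ℝ) ≤ (Ioc f M₁).indicator (fun s => (f - M₂) / (s - M₂)) t := by
        refine indicator_nonneg (fun s hs => ?_) t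
        have : f < s := hs.1
        exact div_nonneg hfM₂.le (by linarith)
      calc G t ≤ 1 := hG1 t
        _ ≤ H t := by rw [hH]; simp only [indicator_of_mem h1']; linarith
    · push_neg at htf
      by_cases htM : t ≤ M₁
      · have hwk := weak_type_bound hT hnn hφint hbd hlb hint htf (by linarith)
        have htM₂ : 0 < t - M₂ := by linarith
        have hGle : G t ≤ (f - M₂) / (t - M₂) := by
          rw [hG]
          calc (μ {a | t < maxOp μ T φ a}).toReal
              ≤ (ENNReal.ofReal ((f - M₂) / (t - M₂))).toReal :=
                ENNReal.toReal_mono ENNReal.ofReal_ne_top hwk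
            _ = (f - M₂) / (t - M₂) :=
                ENNReal.toReal_ofReal (div_nonneg hfM₂.le htM₂.le)
        have h1' : t ∉ Ioc (0:ℝ) f := fun hc => absurd hc.2 (not_le.2 htf)
        have h2' : t ∈ Ioc f M₁ := ⟨htf, htM⟩
        rw [hH]
        simp only [indicator_of_notMem h1', indicator_of_mem h2', zero_add]
        exact hGle
      · push_neg at htM
        rw [hG0 t htM, hH]
        have h1' : t ∉ Ioc (0:ℝ) f := fun hc => absurd hc.2 (by linarith)
        have h2' : t ∉ Ioc f M₁ := fun hc => absurd hc.2 (not_le.2 htM)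
        simp [indicator_of_notMem h1', indicator_of_notMem h2']
  -- compare integrals
  have hcomp : ∫ t in Ioi (0:ℝ), G t ≤ ∫ t in Ioi (0:ℝ), H t :=
    setIntegral_mono_on hGint hHint measurableSet_Ioi hpt
  -- compute the integral of H
  have hHval : ∫ t in Ioi (0:ℝ), H t = f + (f - M₂) * Real.log ((M₁ - M₂) / (f - M₂)) := by
    rw [hH]
    rw [integral_add (hind1.integrableOn) (hind2.integrableOn)]
    have hA : ∫ t in Ioi (0:ℝ), (Ioc (0:ℝ) f).indicator (fun _ => (1:ℝ)) t = f := by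
      rw [integral_indicator measurableSet_Ioc, Measure.restrict_restrict measurableSet_Ioc,
        inter_eq_left.2 (fun s hs => hs.1), setIntegral_const, smul_eq_mul, mul_one,
        measureReal_def, Real.volume_Ioc, ENNReal.toReal_ofReal (by linarith)]
      ring
    have hB : ∫ t in Ioi (0:ℝ), (Ioc f M₁).indicator (fun s => (f - M₂) / (s - M₂)) t
        = (f - M₂) * Real.log ((M₁ - M₂) / (f - M₂)) := by
      have hIsub : Ioc f M₁ ∩ Ioi (0:ℝ) = Ioc f M₁ :=
        inter_eq_left.2 (fun s hs => lt_of_le_of_lt hf0.le hs.1)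
      rw [integral_indicator measurableSet_Ioc, Measure.restrict_restrict measurableSet_Ioc,
        hIsub]
      rw [← intervalIntegral.integral_of_le h1]
      simp_rw [div_eq_mul_inv]
      rw [intervalIntegral.integral_const_mul]
      have hsub := intervalIntegral.integral_comp_sub_right (a := f) (b := M₁)
        (fun u => u⁻¹) M₂
      rw [hsub, integral_inv (Set.notMem_uIcc_of_lt hfM₂ hM₁M₂), div_eq_mul_inv]
    rw [hA, hB]
  rw [hHval] at hcomp
  exact hcomp
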